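/- Let H be an r-uniform hypergraph on n vertices with no matching of size s+1, and let v_1,…,v_n be its vertices in decreasing order of degree. Then the degree of v_{s+1} is at most r·s·C(n-2, r-2). -/

import Mathlib

open Finset

/-- `H` contains a matching of size `k`, i.e. `k` pairwise disjoint hyperedges. -/
def HasMatching {V : Type*} [DecidableEq V] (H : Finset (Finset V)) (k : ℕ) : Prop :=
  ∃ M : Finset (Finset V), M ⊆ H ∧ M.card = k ∧
    (M : Set (Finset V)).Pairwise fun e f => Disjoint e f

/-- The degree of a vertex: the number of hyperedges containing it. -/
def degH {V : Type*} [DecidableEq V] (H : Finset (Finset V)) (v : V) : ℕ :=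
  (H.filter fun e => v ∈ e).card

lemma pair_count {n r : ℕ} (H : Finset (Finset (Fin n)))
    (hunif : ∀ e ∈ H, e.card = r) (v w : Fin n) (hvw : v ≠ w) :
    (H.filter fun e => v ∈ e ∧ w ∈ e).card ≤ Nat.choose (n - 2) (r - 2) := by
  rcases lt_or_ge r 2 with hr | hr
  · have : (H.filter fun e => v ∈ e ∧ w ∈ e) = ∅ := by
      rw [Finset.filter_eq_empty_iff]
      rintro e he ⟨hv, hw⟩
      have h2 : 1 < e.card := Finset.one_lt_card.mpr ⟨v, hv, w, hw, hvw⟩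
      rw [hunif e he] at h2; omega
    simp [this]
  · have hcard : ((univ : Finset (Fin n)) \ {v, w}).card = n - 2 := by
      rw [Finset.card_sdiff_of_subset (subset_univ _), card_univ, Fintype.card_fin,
        Finset.card_insert_of_notMem (by simpa using hvw), Finset.card_singleton]
    calc (H.filter fun e => v ∈ e ∧ w ∈ e).card
        ≤ (Finset.powersetCard (r-2) ((univ : Finset (Fin n)) \ {v,w})).card := by
          apply Finset.card_le_card_of_injOn (fun e => e \ {v,w})
          · intro e he
            simp only [mem_coe, mem_filter] at he
            rw [mem_coe, Finset.mem_powersetCard]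
            constructor
            · intro x hx; simp only [Finset.mem_sdiff, mem_univ, true_and] at hx ⊢
              exact hx.2
            · rw [Finset.card_sdiff_of_subset, hunif e he.1,
                Finset.card_insert_of_notMem (by simpa using hvw), Finset.card_singleton]
              intro x hx
              simp only [Finset.mem_insert, Finset.mem_singleton] at hx
              rcases hx with rfl | rfl
              · exact he.2.1
              · exact he.2.2
          · intro a ha b hb hab
            simp only [coe_filter, Set.mem_setOf_eq] at ha hb
            have hsa : ({v, w} : Finset (Fin n)) ⊆ a := by
              intro x hx; simp only [Finset.mem_insert, Finset.mem_singleton] at hx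
              rcases hx with rfl | rfl; exacts [ha.2.1, ha.2.2]
            have hsb : ({v, w} : Finset (Fin n)) ⊆ b := by
              intro x hx; simp only [Finset.mem_insert, Finset.mem_singleton] at hx
              rcases hx with rfl | rfl; exacts [hb.2.1, hb.2.2]
            simp only [] at hab
            rw [← Finset.sdiff_union_of_subset hsa, hab, Finset.sdiff_union_of_subset hsb]
      _ = Nat.choose (n-2) (r-2) := by rw [Finset.card_powersetCard, hcard]

/-- In an `r`-uniform hypergraph on `n` vertices with no matching of size `s+1`,
the `(s+1)`-st largest degree is at most `r·s·C(n-2, r-2)`; equivalently, at most `s`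
vertices have degree exceeding this bound. -/
theorem stmt_2 (r s n : ℕ) (hn : (s + 2) * r + s ≤ n) (H : Finset (Finset (Fin n)))
    (hunif : ∀ e ∈ H, e.card = r) (hM : ¬ HasMatching H (s + 1)) :
    (Finset.univ.filter fun v : Fin n =>
      r * s * Nat.choose (n - 2) (r - 2) < degH H v).card ≤ s := by
  classical
  rcases Nat.eq_zero_or_pos r with rfl | hr
  · have hdeg : ∀ v : Fin n, degH H v = 0 := by
      intro v
      rw [degH, Finset.card_eq_zero, Finset.filter_eq_empty_iff]
      intro e he hv
      have h0 := hunif e he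
      rw [Finset.card_eq_zero] at h0
      subst h0; exact absurd hv (Finset.notMem_empty v)
    simp [hdeg]
  by_contra hcon
  push_neg at hcon
  obtain ⟨S, hS, hScard⟩ := Finset.exists_subset_card_eq (show s + 1 ≤ _ from hcon)
  have hSdeg : ∀ v ∈ S, r * s * Nat.choose (n - 2) (r - 2) < degH H v := by
    intro v hv
    have hm := hS hv; rw [Finset.mem_filter] at hm; exact hm.2
  set f : ℕ → Fin n := fun j => (S.orderIsoOfFin hScard ⟨min j s, by omega⟩ : Fin n) with hf
  have hfS : ∀ j, f j ∈ S := fun j => (S.orderIsoOfFin hScard _).2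
  have hfinj : ∀ j < s+1, ∀ k < s+1, f j = f k → j = k := by
    intro j hj k hk h
    have h2 : (⟨min j s, by omega⟩ : Fin (s+1)) = ⟨min k s, by omega⟩ :=
      (S.orderIsoOfFin hScard).injective (Subtype.ext h)
    rw [Fin.mk.injEq] at h2
    omega
  have key : ∀ i, i ≤ s+1 → ∃ g : ℕ → Finset (Fin n),
      (∀ j < i, g j ∈ H ∧ f j ∈ g j ∧ ∀ k < s+1, j < k → f k ∉ g j) ∧
      (∀ j < i, ∀ k < i, j ≠ k → Disjoint (g j) (g k)) := by
    intro i
    induction i with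
    | zero => exact fun _ => ⟨fun _ => ∅, by omega, by omega⟩
    | succ i ih =>
      intro hi
      obtain ⟨g, hg1, hg2⟩ := ih (by omega)
      set v := f i with hv
      set W : Finset (Fin n) :=
        (Finset.range i).biUnion g ∪ (Finset.Ico (i+1) (s+1)).image f with hW
      have hvW : v ∉ W := by
        intro hvm
        rw [hW, Finset.mem_union] at hvm
        rcases hvm with h | h
        · rw [Finset.mem_biUnion] at h
          obtain ⟨j, hj, hjm⟩ := h
          rw [Finset.mem_range] at hj
          exact (hg1 j hj).2.2 i (by omega) (by omega) hjm
        · rw [Finset.mem_image] at h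
          obtain ⟨k, hk, hkf⟩ := h
          rw [Finset.mem_Ico] at hk
          have := hfinj k (by omega) i (by omega) hkf
          omega
      have hWcard : W.card ≤ s * r := by
        have h1 : ((Finset.range i).biUnion g).card ≤ i * r := by
          calc ((Finset.range i).biUnion g).card
              ≤ ∑ j ∈ Finset.range i, (g j).card := Finset.card_biUnion_le
            _ ≤ ∑ _j ∈ Finset.range i, r := by
                apply Finset.sum_le_sum; intro j hj
                rw [Finset.mem_range] at hj
                exact le_of_eq (hunif _ (hg1 j hj).1)
            _ = i * r := by rw [Finset.sum_const, Finset.card_range, smul_eq_mul]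
        have h2 : (((Finset.Ico (i+1) (s+1)).image f)).card ≤ s - i := by
          calc (((Finset.Ico (i+1) (s+1)).image f)).card
              ≤ (Finset.Ico (i+1) (s+1)).card := Finset.card_image_le
            _ = s - i := by rw [Nat.card_Ico]; omega
        have h3 := Finset.card_union_le ((Finset.range i).biUnion g)
          ((Finset.Ico (i+1) (s+1)).image f)
        obtain ⟨t, ht⟩ : ∃ t, s = i + t := ⟨s - i, by omega⟩
        have h4 : t ≤ t * r := Nat.le_mul_of_pos_right t hr
        have h5 : s * r = i * r + t * r := by rw [ht, Nat.add_mul]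
        rw [← hW] at h3
        omega
      have hbad : (H.filter fun e => v ∈ e ∧ ¬ Disjoint e W).card
          ≤ r * s * Nat.choose (n - 2) (r - 2) := by
        calc (H.filter fun e => v ∈ e ∧ ¬ Disjoint e W).card
            ≤ (W.biUnion fun w => H.filter fun e => v ∈ e ∧ w ∈ e).card := by
              apply Finset.card_le_card
              intro e he
              rw [Finset.mem_filter] at he
              obtain ⟨he1, he2, he3⟩ := he
              rw [Finset.not_disjoint_iff] at he3
              obtain ⟨w, hw1, hw2⟩ := he3
              rw [Finset.mem_biUnion]
              exact ⟨w, hw2, by rw [Finset.mem_filter]; exact ⟨he1, he2, hw1⟩⟩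
          _ ≤ ∑ w ∈ W, (H.filter fun e => v ∈ e ∧ w ∈ e).card := Finset.card_biUnion_le
          _ ≤ ∑ _w ∈ W, Nat.choose (n-2) (r-2) := by
              apply Finset.sum_le_sum
              intro w hw
              exact pair_count H hunif v w (fun h => hvW (h ▸ hw))
          _ = W.card * Nat.choose (n-2) (r-2) := by rw [Finset.sum_const, smul_eq_mul]
          _ ≤ s * r * Nat.choose (n-2) (r-2) := Nat.mul_le_mul_right _ hWcard
          _ = r * s * Nat.choose (n-2) (r-2) := by ring
      have hsplit : degH H v ≤ (H.filter fun e => v ∈ e ∧ ¬ Disjoint e W).card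
          + (H.filter fun e => v ∈ e ∧ Disjoint e W).card := by
        rw [degH]
        apply le_trans (Finset.card_le_card ?_) (Finset.card_union_le _ _)
        intro e he
        rw [Finset.mem_filter] at he
        rw [Finset.mem_union, Finset.mem_filter, Finset.mem_filter]
        by_cases h : Disjoint e W
        · right; exact ⟨he.1, he.2, h⟩
        · left; exact ⟨he.1, he.2, h⟩
      have hgood : 0 < (H.filter fun e => v ∈ e ∧ Disjoint e W).card := by
        have := hSdeg v (hfS i); omega
      obtain ⟨e, he⟩ := Finset.card_pos.mp hgood
      rw [Finset.mem_filter] at he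
      obtain ⟨heH, hev, heW⟩ := he
      refine ⟨fun j => if j = i then e else g j, ?_, ?_⟩
      · intro j hj
        by_cases hji : j = i
        · subst hji
          simp only [if_pos rfl]
          refine ⟨heH, hev, ?_⟩
          intro k hk hjk hke
          apply Finset.disjoint_left.mp heW hke
          rw [hW, Finset.mem_union, Finset.mem_image]
          right; exact ⟨k, by rw [Finset.mem_Ico]; omega, rfl⟩
        · simp only [if_neg hji]
          exact hg1 j (by omega)
      · intro j hj k hk hjk
        have hsub : ∀ m, m < i → g m ⊆ W := by
          intro m hm x hx
          rw [hW, Finset.mem_union, Finset.mem_biUnion]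
          left; exact ⟨m, Finset.mem_range.mpr hm, hx⟩
        by_cases hji : j = i
        · have hki : ¬ (k = i) := fun h => hjk (by rw [hji, h])
          simp only [if_pos hji, if_neg hki]
          exact Finset.disjoint_of_subset_right (hsub k (by omega)) heW
        · by_cases hki : k = i
          · subst hki
            simp only [if_neg hji, if_pos rfl]
            exact (Finset.disjoint_of_subset_right (hsub j (by omega)) heW).symm
          · simp only [if_neg hji, if_neg hki]
            exact hg2 j (by omega) k (by omega) hjk
  obtain ⟨g, hg1, hg2⟩ := key (s+1) le_rfl
  apply hM
  refine ⟨(Finset.range (s+1)).image g, ?_, ?_, ?_⟩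
  · intro e he
    rw [Finset.mem_image] at he
    obtain ⟨j, hj, rfl⟩ := he
    exact (hg1 j (Finset.mem_range.mp hj)).1
  · rw [Finset.card_image_of_injOn, Finset.card_range]
    intro j hj k hk hjk
    by_contra hne
    have hd := hg2 j (Finset.mem_range.mp hj) k (Finset.mem_range.mp hk) hne
    rw [hjk] at hd
    have hfk : f k ∈ g k := (hg1 k (Finset.mem_range.mp hk)).2.1
    exact (Finset.disjoint_left.mp hd hfk) hfk
  · intro a ha b hb hab
    simp only [Finset.coe_image, Finset.coe_range, Set.mem_image, Set.mem_Iio] at ha hb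
    obtain ⟨j, hj, rfl⟩ := ha
    obtain ⟨k, hk, rfl⟩ := hb
    exact hg2 j hj k hk (fun h => hab (by rw [h]))
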